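/- Let λ₁, λ₂, λ₃, λ₄ and μ₁, μ₂, μ₃, μ₄ be real numbers with λ₂ = λ₃ and μ₂ = μ₃, and let (b, c) ∈ R² with (b, c) ≠ (0, 0). Suppose (λ₄ − λ₁)·b = λ₂·c and (μ₄ − μ₁)·b = μ₂·c. Then (λ₄ − λ₁)·μ₂ − (μ₄ − μ₁)·λ₂ = 0; consequently there exists (α, β) ≠ (0,0) such that α·[[λ₁,λ₂],[λ₃,λ₄]] + β·[[μ₁,μ₂],[μ₃,μ₄]] is a scalar multiple of the identity matrix. -/

import Mathlib

lemma aux8 (l1 l2 l3 l4 m1 m2 m3 m4 α β : ℝ)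
    (h1 : α * l2 + β * m2 = 0) (h2 : α * l3 + β * m3 = 0)
    (h3 : α * (l4 - l1) + β * (m4 - m1) = 0) :
    α • (!![l1, l2; l3, l4] : Matrix (Fin 2) (Fin 2) ℝ) +
        β • (!![m1, m2; m3, m4] : Matrix (Fin 2) (Fin 2) ℝ) =
      (α * l1 + β * m1) • (1 : Matrix (Fin 2) (Fin 2) ℝ) := by
  ext i j
  fin_cases i <;> fin_cases j <;>
    simp [Matrix.one_apply] <;> nlinarith [h1, h2, h3]

/-- Algebraic core of the normal-curvature theorem: if both self-adjoint shape operators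
satisfy the vanishing conditions of `R_∇⊥` at a non-inflection point `((b,c) ≠ (0,0))`,
then the point is σ-semiumbilic. -/
theorem stmt8 (l1 l2 l3 l4 m1 m2 m3 m4 b c : ℝ)
    (hl : l2 = l3) (hm : m2 = m3) (hbc : (b, c) ≠ (0, 0))
    (h1 : (l4 - l1) * b = l2 * c) (h2 : (m4 - m1) * b = m2 * c) :
    (l4 - l1) * m2 - (m4 - m1) * l2 = 0 ∧
    ∃ α β : ℝ, (α, β) ≠ (0, 0) ∧ ∃ k : ℝ,
      α • (!![l1, l2; l3, l4] : Matrix (Fin 2) (Fin 2) ℝ) +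
        β • (!![m1, m2; m3, m4] : Matrix (Fin 2) (Fin 2) ℝ) =
      k • (1 : Matrix (Fin 2) (Fin 2) ℝ) := by
  have hD : (l4 - l1) * m2 - (m4 - m1) * l2 = 0 := by
    rcases eq_or_ne b 0 with hb | hb
    · have hc : c ≠ 0 := by
        intro hc; exact hbc (by simp [hb, hc])
      have hl2 : l2 = 0 := by
        have := h1; simp [hb] at this; exact this.resolve_right hc
      have hm2 : m2 = 0 := by
        have := h2; simp [hb] at this; exact this.resolve_right hc
      simp [hl2, hm2]
    · have : ((l4 - l1) * m2 - (m4 - m1) * l2) * b = 0 := by linear_combination m2 * h1 - l2 * h2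
      exact (mul_eq_zero.mp this).resolve_right hb
  refine ⟨hD, ?_⟩
  by_cases hz : m2 = 0 ∧ l2 = 0
  · obtain ⟨hm2, hl2⟩ := hz
    by_cases hz2 : (m4 - m1) = 0 ∧ (l4 - l1) = 0
    · exact ⟨1, 0, by simp, _, aux8 _ _ _ _ _ _ _ _ _ _
        (by simp [hl2, hm2]) (by simp [← hl, ← hm, hl2, hm2])
        (by simp [hz2.1, hz2.2])⟩
    · refine ⟨m4 - m1, -(l4 - l1), ?_, _, aux8 _ _ _ _ _ _ _ _ _ _
        (by simp [hl2, hm2]) (by simp [← hl, ← hm, hl2, hm2]) (by ring)⟩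
      intro h
      rw [Prod.mk.injEq] at h
      exact hz2 ⟨h.1, by linarith [h.2]⟩
  · refine ⟨m2, -l2, ?_, _, aux8 _ _ _ _ _ _ _ _ _ _
      (by ring) (by rw [← hl, ← hm]; ring) (by nlinarith [hD])⟩
    intro h
    rw [Prod.mk.injEq] at h
    exact hz ⟨h.1, by linarith [h.2]⟩
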